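/- Every countable coded β-model satisfies ATR₀ (and hence ACA₀), provably in ACA₀. -/
import Mathlib


namespace Paper

/-! ### Syntax and semantics of second-order arithmetic (L₂) -/

/-- Number terms of L₂. -/
inductive Term where
  | var : ℕ → Term
  | zero : Term
  | one : Term
  | add : Term → Term → Term
  | mul : Term → Term → Term

/-- Formulas of L₂.  Number variables and set variables are indexed by naturals;
`mem t i` means `t ∈ X_i`. -/
inductive Formula where
  | eq : Term → Term → Formula
  | lt : Term → Term → Formula
  | mem : Term → ℕ → Formula
  | not : Formula → Formula
  | and : Formula → Formula → Formula
  | or : Formula → Formula → Formula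
  | nall : ℕ → Formula → Formula
  | nex : ℕ → Formula → Formula
  | sall : ℕ → Formula → Formula
  | sex : ℕ → Formula → Formula

def Term.val (e : ℕ → ℕ) : Term → ℕ
  | .var i => e i
  | .zero => 0
  | .one => 1
  | .add s t => s.val e + t.val e
  | .mul s t => s.val e * t.val e

/-- Satisfaction in the full standard model: set quantifiers range over all subsets of ℕ. -/
def Formula.Sat (e : ℕ → ℕ) (E : ℕ → Set ℕ) : Formula → Prop
  | .eq s t => s.val e = t.val e
  | .lt s t => s.val e < t.val e
  | .mem t i => t.val e ∈ E i
  | .not φ => ¬ φ.Sat e E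
  | .and φ ψ => φ.Sat e E ∧ ψ.Sat e E
  | .or φ ψ => φ.Sat e E ∨ ψ.Sat e E
  | .nall i φ => ∀ n : ℕ, φ.Sat (Function.update e i n) E
  | .nex i φ => ∃ n : ℕ, φ.Sat (Function.update e i n) E
  | .sall i φ => ∀ X : Set ℕ, φ.Sat e (Function.update E i X)
  | .sex i φ => ∃ X : Set ℕ, φ.Sat e (Function.update E i X)

/-- Satisfaction in an ω-model with second-order part `M`:
set quantifiers range over `M`. -/
def Formula.SatIn (M : Set (Set ℕ)) (e : ℕ → ℕ) (E : ℕ → Set ℕ) : Formula → Prop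
  | .eq s t => s.val e = t.val e
  | .lt s t => s.val e < t.val e
  | .mem t i => t.val e ∈ E i
  | .not φ => ¬ φ.SatIn M e E
  | .and φ ψ => φ.SatIn M e E ∧ ψ.SatIn M e E
  | .or φ ψ => φ.SatIn M e E ∨ ψ.SatIn M e E
  | .nall i φ => ∀ n : ℕ, φ.SatIn M (Function.update e i n) E
  | .nex i φ => ∃ n : ℕ, φ.SatIn M (Function.update e i n) E
  | .sall i φ => ∀ X ∈ M, φ.SatIn M e (Function.update E i X)
  | .sex i φ => ∃ X ∈ M, φ.SatIn M e (Function.update E i X)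

/-- A formula is arithmetic if it has no set quantifiers. -/
def Formula.Arithmetic : Formula → Prop
  | .eq _ _ => True
  | .lt _ _ => True
  | .mem _ _ => True
  | .not φ => φ.Arithmetic
  | .and φ ψ => φ.Arithmetic ∧ ψ.Arithmetic
  | .or φ ψ => φ.Arithmetic ∧ ψ.Arithmetic
  | .nall _ φ => φ.Arithmetic
  | .nex _ φ => φ.Arithmetic
  | .sall _ _ => False
  | .sex _ _ => False

mutual
  /-- Σ¹ₙ formulas (in prenex normal form). -/
  inductive Formula.IsSigma : ℕ → Formula → Prop where
    | arith {n : ℕ} {φ : Formula} : φ.Arithmetic → Formula.IsSigma n φ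
    | ofPi {n : ℕ} {φ : Formula} : Formula.IsPi n φ → Formula.IsSigma (n+1) φ
    | sex {n i : ℕ} {φ : Formula} :
        Formula.IsSigma (n+1) φ → Formula.IsSigma (n+1) (.sex i φ)
  /-- Π¹ₙ formulas (in prenex normal form). -/
  inductive Formula.IsPi : ℕ → Formula → Prop where
    | arith {n : ℕ} {φ : Formula} : φ.Arithmetic → Formula.IsPi n φ
    | ofSigma {n : ℕ} {φ : Formula} : Formula.IsSigma n φ → Formula.IsPi (n+1) φ
    | sall {n i : ℕ} {φ : Formula} :
        Formula.IsPi (n+1) φ → Formula.IsPi (n+1) (.sall i φ)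
end

/-- Quantifier-free formulas. -/
def Formula.QFree : Formula → Prop
  | .eq _ _ => True
  | .lt _ _ => True
  | .mem _ _ => True
  | .not φ => φ.QFree
  | .and φ ψ => φ.QFree ∧ ψ.QFree
  | .or φ ψ => φ.QFree ∧ ψ.QFree
  | .nall _ _ => False
  | .nex _ _ => False
  | .sall _ _ => False
  | .sex _ _ => False

/-- Existential (Σ⁰₁-defining) formulas: number-existential quantifiers over a
quantifier-free matrix.  (By the relativized Matiyasevich theorem these define
exactly the sets r.e. in the set parameters.) -/
inductive Formula.Existential : Formula → Prop where
  | qf {φ : Formula} : φ.QFree → Formula.Existential φ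
  | nex {i : ℕ} {φ : Formula} : Formula.Existential φ → Formula.Existential (.nex i φ)

/-- Gödel codes of terms. -/
def Term.code : Term → ℕ
  | .var i => Nat.pair 0 i
  | .zero => Nat.pair 1 0
  | .one => Nat.pair 2 0
  | .add s t => Nat.pair 3 (Nat.pair s.code t.code)
  | .mul s t => Nat.pair 4 (Nat.pair s.code t.code)

/-- Gödel codes of formulas. -/
def Formula.code : Formula → ℕ
  | .eq s t => Nat.pair 0 (Nat.pair s.code t.code)
  | .lt s t => Nat.pair 1 (Nat.pair s.code t.code)
  | .mem t i => Nat.pair 2 (Nat.pair t.code i)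
  | .not φ => Nat.pair 3 φ.code
  | .and φ ψ => Nat.pair 4 (Nat.pair φ.code ψ.code)
  | .or φ ψ => Nat.pair 5 (Nat.pair φ.code ψ.code)
  | .nall i φ => Nat.pair 6 (Nat.pair i φ.code)
  | .nex i φ => Nat.pair 7 (Nat.pair i φ.code)
  | .sall i φ => Nat.pair 8 (Nat.pair i φ.code)
  | .sex i φ => Nat.pair 9 (Nat.pair i φ.code)

/-! ### Reducibilities and jumps -/

/-- `B` is r.e. in `A`: definable by an existential formula with parameter `A`
(the free number variables are all evaluated at the input `n`,
the set variables at `A`). -/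
def REIn (B A : Set ℕ) : Prop :=
  ∃ φ : Formula, φ.Existential ∧ ∀ n : ℕ, n ∈ B ↔ φ.Sat (fun _ => n) (fun _ => A)

/-- Turing reducibility: `B` is Δ⁰₁ in `A`. -/
def TuringLE (B A : Set ℕ) : Prop := REIn B A ∧ REIn Bᶜ A

/-- The Turing jump of `A`: the set of codes of true existential sentences with
parameter `A` (a complete Σ⁰₁(A) set). -/
def turingJump (A : Set ℕ) : Set ℕ :=
  {n | ∃ φ : Formula, φ.code = n ∧ φ.Existential ∧ φ.Sat (fun _ => 0) (fun _ => A)}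

/-- Hyperarithmetic reducibility: `B` is Δ¹₁ definable with parameter `A`. -/
def HypLE (B A : Set ℕ) : Prop :=
  ∃ φ ψ : Formula, φ.IsSigma 1 ∧ ψ.IsPi 1 ∧
    ∀ n : ℕ, (n ∈ B ↔ φ.Sat (fun _ => n) (fun _ => A)) ∧
      (n ∈ B ↔ ψ.Sat (fun _ => n) (fun _ => A))

/-- The hyperjump `𝒪^A` of `A`: the set of codes of true Π¹₁ sentences with
parameter `A` (a complete Π¹₁(A) set). -/
def hyperjump (A : Set ℕ) : Set ℕ :=
  {n | ∃ φ : Formula, φ.code = n ∧ φ.IsPi 1 ∧ φ.Sat (fun _ => 0) (fun _ => A)}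

/-! ### β-models and coded models -/

/-- A βₙ-model: a (nonempty) ω-model correct for Σ¹ₙ formulas with parameters
from the model. -/
def IsBetaNModel (n : ℕ) (M : Set (Set ℕ)) : Prop :=
  M.Nonempty ∧ ∀ φ : Formula, φ.IsSigma n →
    ∀ (e : ℕ → ℕ) (E : ℕ → Set ℕ), (∀ i, E i ∈ M) → (φ.SatIn M e E ↔ φ.Sat e E)

/-- A β-model is a β₁-model. -/
def IsBetaModel (M : Set (Set ℕ)) : Prop := IsBetaNModel 1 M

/-- The `i`-th slice of a real `C` coding a countable family of reals. -/
def slice (C : Set ℕ) (i : ℕ) : Set ℕ := {m | Nat.pair i m ∈ C}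

/-- The countable family of reals coded by `C`. -/
def codedFamily (C : Set ℕ) : Set (Set ℕ) := Set.range (slice C)

/-- `C` is a countable coded β-model. -/
def IsCodedBetaModel (C : Set ℕ) : Prop := IsBetaModel (codedFamily C)

/-- `C` is a countable coded βₙ-model. -/
def IsCodedBetaNModel (n : ℕ) (C : Set ℕ) : Prop := IsBetaNModel n (codedFamily C)

/-- An ω-model `M` satisfies the L₂-theory `T` (open axioms are satisfied under
all assignments with set parameters from `M`). -/
def SatisfiesTheory (M : Set (Set ℕ)) (T : Set Formula) : Prop :=
  ∀ φ ∈ T, ∀ (e : ℕ → ℕ) (E : ℕ → Set ℕ), (∀ i, E i ∈ M) → φ.SatIn M e E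

end Paper

namespace Paper

/-! ### Presentations of ordinals and `ω₁^X` -/

/-- The field of the binary relation on ℕ coded (via `Nat.pair`) by `R`. -/
def fieldOf (R : Set ℕ) : Set ℕ := {a | ∃ b, Nat.pair a b ∈ R ∨ Nat.pair b a ∈ R}

/-- The strict order relation on the field of `R` coded by `R`. -/
def codedLT (R : Set ℕ) (a b : fieldOf R) : Prop := Nat.pair a.1 b.1 ∈ R

/-- `R` is a presentation of the ordinal `α`: it codes a well-order of
a subset of ℕ of order type `α`. -/
def CodesOrdinal (R : Set ℕ) (α : Ordinal) : Prop :=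
  ∃ h : IsWellOrder (fieldOf R) (codedLT R), @Ordinal.type _ (codedLT R) h = α

/-- `ω₁^X`: the least ordinal with no presentation recursive in `X`. -/
noncomputable def omega1 (X : Set ℕ) : Ordinal :=
  sInf {α | ¬ ∃ R : Set ℕ, TuringLE R X ∧ CodesOrdinal R α}

/-- The Spector order: `A ≺ B` iff `𝒪^A ≤_H B`. -/
def spectorRel (A B : Set ℕ) : Prop := HypLE (hyperjump A) B

end Paper

namespace Paper

/-- The part of `Y` on the columns strictly `X`-below `j`. -/
def restrictBelow (X Y : Set ℕ) (j : ℕ) : Set ℕ :=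
  {p | ∃ m i, p = Nat.pair m i ∧ Nat.pair i j ∈ X ∧ Nat.pair m i ∈ Y}

/-- An ω-model satisfies arithmetical comprehension. -/
def SatArithComp (M : Set (Set ℕ)) : Prop :=
  ∀ φ : Formula, φ.Arithmetic → ∀ (e : ℕ → ℕ) (E : ℕ → Set ℕ), (∀ i, E i ∈ M) →
    {n : ℕ | φ.SatIn M (Function.update e 0 n) E} ∈ M

/-- An ω-model satisfies ACA₀ (the basic axioms and set induction hold in any
ω-model; the content is arithmetical comprehension). -/
def SatACA (M : Set (Set ℕ)) : Prop := M.Nonempty ∧ SatArithComp M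

/-- `X` codes a linear order which is a well-order *in the sense of the
ω-model `M`*: every set in `M` meeting its field has a least element. -/
def InternalWO (M : Set (Set ℕ)) (X : Set ℕ) : Prop :=
  (∀ a, Nat.pair a a ∉ X) ∧
  (∀ a b c, Nat.pair a b ∈ X → Nat.pair b c ∈ X → Nat.pair a c ∈ X) ∧
  (∀ a ∈ fieldOf X, ∀ b ∈ fieldOf X, a = b ∨ Nat.pair a b ∈ X ∨ Nat.pair b a ∈ X) ∧
  (∀ Z ∈ M, (∃ a, a ∈ Z ∧ a ∈ fieldOf X) →
    ∃ a, a ∈ Z ∧ a ∈ fieldOf X ∧ ∀ b, b ∈ Z → b ∈ fieldOf X → Nat.pair b a ∉ X)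

/-- An ω-model satisfies ATR₀: ACA₀ together with arithmetical transfinite
recursion along any of its internal well-orders. -/
def SatATR (M : Set (Set ℕ)) : Prop :=
  SatACA M ∧
  ∀ θ : Formula, θ.Arithmetic → ∀ (e : ℕ → ℕ) (E : ℕ → Set ℕ), (∀ i, E i ∈ M) →
    ∀ X ∈ M, InternalWO M X →
      ∃ Y ∈ M, ∀ j ∈ fieldOf X, ∀ n : ℕ,
        (Nat.pair n j ∈ Y ↔
          θ.SatIn M (Function.update e 0 n) (Function.update E 0 (restrictBelow X Y j)))

end Paper

namespace Paper

/-! ### Auxiliary: variable bounds and invariance -/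

def Term.numBound : Term → ℕ
  | .var i => i + 1
  | .zero => 0
  | .one => 0
  | .add s t => max s.numBound t.numBound
  | .mul s t => max s.numBound t.numBound

lemma Term.val_update {t : Term} {v : ℕ} (h : t.numBound ≤ v) (e : ℕ → ℕ) (n : ℕ) :
    t.val (Function.update e v n) = t.val e := by
  induction t with
  | var i =>
      simp only [Term.numBound] at h
      simp [Term.val, Function.update_of_ne (by omega : i ≠ v)]
  | zero => rfl
  | one => rfl
  | add s t ihs iht =>
      simp only [Term.numBound, max_le_iff] at h
      simp [Term.val, ihs h.1, iht h.2]
  | mul s t ihs iht =>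
      simp only [Term.numBound, max_le_iff] at h
      simp [Term.val, ihs h.1, iht h.2]

def Formula.numBound : Formula → ℕ
  | .eq s t => max s.numBound t.numBound
  | .lt s t => max s.numBound t.numBound
  | .mem t _ => t.numBound
  | .not φ => φ.numBound
  | .and φ ψ => max φ.numBound ψ.numBound
  | .or φ ψ => max φ.numBound ψ.numBound
  | .nall i φ => max (i+1) φ.numBound
  | .nex i φ => max (i+1) φ.numBound
  | .sall _ φ => φ.numBound
  | .sex _ φ => φ.numBound

def Formula.setBound : Formula → ℕ
  | .eq _ _ => 0
  | .lt _ _ => 0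
  | .mem _ k => k + 1
  | .not φ => φ.setBound
  | .and φ ψ => max φ.setBound ψ.setBound
  | .or φ ψ => max φ.setBound ψ.setBound
  | .nall _ φ => φ.setBound
  | .nex _ φ => φ.setBound
  | .sall i φ => max (i+1) φ.setBound
  | .sex i φ => max (i+1) φ.setBound

lemma Formula.sat_update_num {φ : Formula} {v : ℕ} (h : φ.numBound ≤ v) :
    ∀ (e : ℕ → ℕ) (n : ℕ) (E : ℕ → Set ℕ),
      (φ.Sat (Function.update e v n) E ↔ φ.Sat e E) := by
  induction φ with
  | eq s t =>
      intro e n E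
      simp only [Formula.numBound, max_le_iff] at h
      simp [Formula.Sat, Term.val_update h.1, Term.val_update h.2]
  | lt s t =>
      intro e n E
      simp only [Formula.numBound, max_le_iff] at h
      simp [Formula.Sat, Term.val_update h.1, Term.val_update h.2]
  | mem t k =>
      intro e n E
      simp only [Formula.numBound] at h
      simp [Formula.Sat, Term.val_update h]
  | not φ ih =>
      intro e n E; simp [Formula.Sat, ih h]
  | and φ ψ ihφ ihψ =>
      simp only [Formula.numBound, max_le_iff] at h
      intro e n E; simp [Formula.Sat, ihφ h.1, ihψ h.2]
  | or φ ψ ihφ ihψ =>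
      simp only [Formula.numBound, max_le_iff] at h
      intro e n E; simp [Formula.Sat, ihφ h.1, ihψ h.2]
  | nall i φ ih =>
      simp only [Formula.numBound, max_le_iff] at h
      intro e n E
      have hiv : i ≠ v := by omega
      simp only [Formula.Sat]
      refine forall_congr' fun m => ?_
      rw [Function.update_comm (Ne.symm hiv)]
      exact ih h.2 _ _ _
  | nex i φ ih =>
      simp only [Formula.numBound, max_le_iff] at h
      intro e n E
      have hiv : i ≠ v := by omega
      simp only [Formula.Sat]
      refine exists_congr fun m => ?_
      rw [Function.update_comm (Ne.symm hiv)]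
      exact ih h.2 _ _ _
  | sall i φ ih =>
      intro e n E
      simp only [Formula.Sat]
      exact forall_congr' fun X => ih h _ _ _
  | sex i φ ih =>
      intro e n E
      simp only [Formula.Sat]
      exact exists_congr fun X => ih h _ _ _

lemma Formula.sat_update_set {φ : Formula} {k : ℕ} (h : φ.setBound ≤ k) :
    ∀ (e : ℕ → ℕ) (E : ℕ → Set ℕ) (Z : Set ℕ),
      (φ.Sat e (Function.update E k Z) ↔ φ.Sat e E) := by
  induction φ with
  | eq s t => intro e E Z; simp [Formula.Sat]
  | lt s t => intro e E Z; simp [Formula.Sat]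
  | mem t j =>
      simp only [Formula.setBound] at h
      intro e E Z
      simp [Formula.Sat, Function.update_of_ne (by omega : j ≠ k)]
  | not φ ih => intro e E Z; simp [Formula.Sat, ih h]
  | and φ ψ ihφ ihψ =>
      simp only [Formula.setBound, max_le_iff] at h
      intro e E Z; simp [Formula.Sat, ihφ h.1, ihψ h.2]
  | or φ ψ ihφ ihψ =>
      simp only [Formula.setBound, max_le_iff] at h
      intro e E Z; simp [Formula.Sat, ihφ h.1, ihψ h.2]
  | nall i φ ih =>
      intro e E Z
      simp only [Formula.Sat]
      exact forall_congr' fun m => ih h _ _ _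
  | nex i φ ih =>
      intro e E Z
      simp only [Formula.Sat]
      exact exists_congr fun m => ih h _ _ _
  | sall i φ ih =>
      simp only [Formula.setBound, max_le_iff] at h
      intro e E Z
      have hik : i ≠ k := by omega
      simp only [Formula.Sat]
      refine forall_congr' fun Xx => ?_
      rw [Function.update_comm (Ne.symm hik)]
      exact ih h.2 _ _ _
  | sex i φ ih =>
      simp only [Formula.setBound, max_le_iff] at h
      intro e E Z
      have hik : i ≠ k := by omega
      simp only [Formula.Sat]
      refine exists_congr fun Xx => ?_
      rw [Function.update_comm (Ne.symm hik)]
      exact ih h.2 _ _ _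

lemma Formula.satIn_iff_sat {φ : Formula} (h : φ.Arithmetic) (M : Set (Set ℕ)) :
    ∀ (e : ℕ → ℕ) (E : ℕ → Set ℕ), (φ.SatIn M e E ↔ φ.Sat e E) := by
  induction φ with
  | eq s t => intro e E; rfl
  | lt s t => intro e E; rfl
  | mem t k => intro e E; rfl
  | not φ ih => intro e E; simp [Formula.Sat, Formula.SatIn, ih h]
  | and φ ψ ihφ ihψ =>
      obtain ⟨h1, h2⟩ := h
      intro e E; simp [Formula.Sat, Formula.SatIn, ihφ h1, ihψ h2]
  | or φ ψ ihφ ihψ =>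
      obtain ⟨h1, h2⟩ := h
      intro e E; simp [Formula.Sat, Formula.SatIn, ihφ h1, ihψ h2]
  | nall i φ ih => intro e E; simp [Formula.Sat, Formula.SatIn, ih h]
  | nex i φ ih => intro e E; simp [Formula.Sat, Formula.SatIn, ih h]
  | sall i φ ih => cases h
  | sex i φ ih => cases h


/-! ### Pairing and membership formulas -/

def pairFml (s t u : Term) : Formula :=
  .or (.and (.lt s t) (.eq u ((t.mul t).add s)))
      (.and (.not (.lt s t)) (.eq u (((s.mul s).add s).add t)))

lemma pairFml_arith (s t u : Term) : (pairFml s t u).Arithmetic := by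
  simp [pairFml, Formula.Arithmetic]

lemma pairFml_sat (s t u : Term) (e : ℕ → ℕ) (E : ℕ → Set ℕ) :
    (pairFml s t u).Sat e E ↔ Nat.pair (s.val e) (t.val e) = u.val e := by
  by_cases hlt : s.val e < t.val e <;>
    simp [pairFml, Formula.Sat, Term.val, Nat.pair, hlt, eq_comm]

def memP (s t : Term) (v k : ℕ) : Formula :=
  .nex v (.and (pairFml s t (.var v)) (.mem (.var v) k))

lemma memP_arith (s t : Term) (v k : ℕ) : (memP s t v k).Arithmetic := by
  simp [memP, Formula.Arithmetic, pairFml_arith]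

lemma memP_sat {s t : Term} {v : ℕ} (hs : s.numBound ≤ v) (ht : t.numBound ≤ v)
    (k : ℕ) (e : ℕ → ℕ) (E : ℕ → Set ℕ) :
    (memP s t v k).Sat e E ↔ Nat.pair (s.val e) (t.val e) ∈ E k := by
  constructor
  · rintro ⟨m, hm1, hm2⟩
    rw [pairFml_sat] at hm1
    rw [Term.val_update hs, Term.val_update ht] at hm1
    simp only [Term.val, Function.update_self] at hm1
    simp only [Formula.Sat, Term.val, Function.update_self] at hm2
    rwa [hm1]
  · intro hm
    refine ⟨Nat.pair (s.val e) (t.val e), ?_, ?_⟩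
    · rw [pairFml_sat, Term.val_update hs, Term.val_update ht]
      simp [Term.val]
    · simpa [Formula.Sat, Term.val] using hm

def iffF (a b : Formula) : Formula := .and (.or (.not a) b) (.or (.not b) a)

lemma iffF_arith {a b : Formula} (ha : a.Arithmetic) (hb : b.Arithmetic) :
    (iffF a b).Arithmetic := by
  simp [iffF, Formula.Arithmetic, ha, hb]

lemma iffF_sat (a b : Formula) (e : ℕ → ℕ) (E : ℕ → Set ℕ) :
    (iffF a b).Sat e E ↔ (a.Sat e E ↔ b.Sat e E) := by
  simp [iffF, Formula.Sat]; tauto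

/-! ### Arithmetical comprehension from the β-model property -/

lemma beta_satArithComp {M : Set (Set ℕ)} (hβ : IsBetaModel M) : SatArithComp M := by
  intro φ hφ e E hE
  set k := φ.setBound with hk
  have hiA : (iffF (.mem (.var 0) k) φ).Arithmetic := iffF_arith trivial hφ
  set body : Formula := .nall 0 (iffF (.mem (.var 0) k) φ) with hbody
  have hbodyA : body.Arithmetic := hiA
  have hsig : (Formula.sex k body).IsSigma 1 :=
    Formula.IsSigma.sex (Formula.IsSigma.arith hbodyA)
  have hsat : (Formula.sex k body).Sat e E := by
    refine ⟨{n | φ.Sat (Function.update e 0 n) E}, fun n => ?_⟩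
    rw [iffF_sat]
    simp only [Formula.Sat, Term.val, Function.update_self, Set.mem_setOf_eq]
    rw [Formula.sat_update_set (le_refl k)]
  obtain ⟨Z, hZM, hZ⟩ := (hβ.2 _ hsig e E hE).mpr hsat
  have : {n : ℕ | φ.SatIn M (Function.update e 0 n) E} = Z := by
    ext n
    have h1 := hZ n
    rw [Formula.satIn_iff_sat hiA, iffF_sat] at h1
    simp only [Formula.Sat, Term.val, Function.update_self] at h1
    rw [Formula.sat_update_set (le_refl k)] at h1
    rw [Set.mem_setOf_eq, Formula.satIn_iff_sat hφ, h1]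
  rw [this]; exact hZM


/-! ### The substitution formula for `restrictBelow` -/

/-- Formula asserting `t ∈ restrictBelow X_sx X_sy (e J)`. -/
def RFml (J sx sy : ℕ) (t : Term) : Formula :=
  .nex (J+1) (.nex (J+2) (.and (pairFml (.var (J+1)) (.var (J+2)) t)
    (.and (memP (.var (J+2)) (.var J) (J+3) sx)
          (memP (.var (J+1)) (.var (J+2)) (J+4) sy))))

lemma RFml_arith (J sx sy : ℕ) (t : Term) : (RFml J sx sy t).Arithmetic := by
  simp [RFml, Formula.Arithmetic, pairFml_arith, memP_arith]

lemma RFml_sat {J : ℕ} {t : Term} (ht : t.numBound ≤ J) (sx sy : ℕ)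
    (e : ℕ → ℕ) (E : ℕ → Set ℕ) :
    (RFml J sx sy t).Sat e E ↔ t.val e ∈ restrictBelow (E sx) (E sy) (e J) := by
  have h12 : (J+1 : ℕ) ≠ J+2 := by omega
  have main : ∀ a b : ℕ,
      ((pairFml (.var (J+1)) (.var (J+2)) t).Sat
          (Function.update (Function.update e (J+1) a) (J+2) b) E ∧
        (memP (.var (J+2)) (.var J) (J+3) sx).Sat
          (Function.update (Function.update e (J+1) a) (J+2) b) E ∧
        (memP (.var (J+1)) (.var (J+2)) (J+4) sy).Sat
          (Function.update (Function.update e (J+1) a) (J+2) b) E)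
      ↔ (t.val e = Nat.pair a b ∧ Nat.pair b (e J) ∈ E sx ∧ Nat.pair a b ∈ E sy) := by
    intro a b
    set e2 : ℕ → ℕ := Function.update (Function.update e (J+1) a) (J+2) b with he2
    have ea : e2 (J+1) = a := by
      rw [he2, Function.update_of_ne h12, Function.update_self]
    have eb : e2 (J+2) = b := by rw [he2, Function.update_self]
    have eJ : e2 J = e J := by
      rw [he2, Function.update_of_ne (by omega : (J:ℕ) ≠ J+2),
        Function.update_of_ne (by omega : (J:ℕ) ≠ J+1)]
    have et : t.val e2 = t.val e := by
      rw [he2, Term.val_update (by omega), Term.val_update (by omega)]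
    rw [pairFml_sat,
      memP_sat (by simp only [Term.numBound]; omega) (by simp only [Term.numBound]; omega),
      memP_sat (by simp only [Term.numBound]; omega) (by simp only [Term.numBound]; omega)]
    simp only [Term.val, ea, eb, eJ, et]
    rw [eq_comm]
  constructor
  · rintro ⟨a, b, h1, h2, h3⟩
    obtain ⟨hp, hx, hy⟩ := (main a b).mp ⟨h1, h2, h3⟩
    exact ⟨a, b, hp, hx, hy⟩
  · rintro ⟨a, b, hp, hx, hy⟩
    obtain ⟨m1, m2, m3⟩ := (main a b).mpr ⟨hp, hx, hy⟩
    exact ⟨a, b, m1, m2, m3⟩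

/-- Substitute the atomic formulas `t ∈ X_0` of an arithmetic formula by the
formula defining `restrictBelow X_sx X_sy (e J)`. -/
def Subst (J sx sy : ℕ) : Formula → Formula
  | .mem t 0 => RFml J sx sy t
  | .mem t (k+1) => .mem t (k+1)
  | .eq s t => .eq s t
  | .lt s t => .lt s t
  | .not φ => .not (Subst J sx sy φ)
  | .and φ ψ => .and (Subst J sx sy φ) (Subst J sx sy ψ)
  | .or φ ψ => .or (Subst J sx sy φ) (Subst J sx sy ψ)
  | .nall i φ => .nall i (Subst J sx sy φ)
  | .nex i φ => .nex i (Subst J sx sy φ)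
  | .sall i φ => .sall i φ
  | .sex i φ => .sex i φ

lemma Subst_arith {θ : Formula} (h : θ.Arithmetic) (J sx sy : ℕ) :
    (Subst J sx sy θ).Arithmetic := by
  induction θ with
  | eq s t => exact trivial
  | lt s t => exact trivial
  | mem t k =>
      cases k with
      | zero => exact RFml_arith J sx sy t
      | succ k => exact trivial
  | not φ ih => exact ih h
  | and φ ψ ihφ ihψ => exact ⟨ihφ h.1, ihψ h.2⟩
  | or φ ψ ihφ ihψ => exact ⟨ihφ h.1, ihψ h.2⟩
  | nall i φ ih => exact ih h
  | nex i φ ih => exact ih h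
  | sall i φ ih => cases h
  | sex i φ ih => cases h

lemma Subst_sat {θ : Formula} {J : ℕ} (hA : θ.Arithmetic) (hnb : θ.numBound ≤ J)
    (sx sy : ℕ) : ∀ (e : ℕ → ℕ) (E : ℕ → Set ℕ),
    (Subst J sx sy θ).Sat e E ↔
      θ.Sat e (Function.update E 0 (restrictBelow (E sx) (E sy) (e J))) := by
  induction θ with
  | eq s t => intro e E; rfl
  | lt s t => intro e E; rfl
  | mem t k =>
      intro e E
      cases k with
      | zero =>
          rw [show Subst J sx sy (.mem t 0) = RFml J sx sy t from rfl,
            RFml_sat hnb]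
          simp [Formula.Sat]
      | succ k =>
          show (Formula.mem t (k+1)).Sat e E ↔ _
          simp [Formula.Sat, Function.update_of_ne (by omega : k+1 ≠ 0)]
  | not φ ih =>
      intro e E
      simp only [Formula.numBound] at hnb
      exact not_congr (ih hA hnb e E)
  | and φ ψ ihφ ihψ =>
      intro e E
      simp only [Formula.numBound, max_le_iff] at hnb
      exact and_congr (ihφ hA.1 hnb.1 e E) (ihψ hA.2 hnb.2 e E)
  | or φ ψ ihφ ihψ =>
      intro e E
      simp only [Formula.numBound, max_le_iff] at hnb
      exact or_congr (ihφ hA.1 hnb.1 e E) (ihψ hA.2 hnb.2 e E)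
  | nall i φ ih =>
      intro e E
      simp only [Formula.numBound, max_le_iff] at hnb
      refine forall_congr' fun n => ?_
      rw [ih hA hnb.2 (Function.update e i n) E,
        Function.update_of_ne (by omega : J ≠ i)]
  | nex i φ ih =>
      intro e E
      simp only [Formula.numBound, max_le_iff] at hnb
      refine exists_congr fun n => ?_
      rw [ih hA hnb.2 (Function.update e i n) E,
        Function.update_of_ne (by omega : J ≠ i)]
  | sall i φ ih => cases hA
  | sex i φ ih => cases hA


/-! ### The Σ¹₁ formula expressing ATR along a given order -/

def fieldFml (J sx : ℕ) : Formula :=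
  .nex (J+1) (.or (memP (.var J) (.var (J+1)) (J+2) sx)
                  (memP (.var (J+1)) (.var J) (J+2) sx))

lemma fieldFml_arith (J sx : ℕ) : (fieldFml J sx).Arithmetic := by
  simp [fieldFml, Formula.Arithmetic, memP_arith]

lemma fieldFml_sat (J sx : ℕ) (e : ℕ → ℕ) (E : ℕ → Set ℕ) :
    (fieldFml J sx).Sat e E ↔ e J ∈ fieldOf (E sx) := by
  have main : ∀ b : ℕ,
      ((memP (.var J) (.var (J+1)) (J+2) sx).Sat (Function.update e (J+1) b) E ∨
       (memP (.var (J+1)) (.var J) (J+2) sx).Sat (Function.update e (J+1) b) E)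
      ↔ (Nat.pair (e J) b ∈ E sx ∨ Nat.pair b (e J) ∈ E sx) := by
    intro b
    rw [memP_sat (by simp only [Term.numBound]; omega) (by simp only [Term.numBound]; omega),
      memP_sat (by simp only [Term.numBound]; omega) (by simp only [Term.numBound]; omega)]
    simp only [Term.val, Function.update_self,
      Function.update_of_ne (by omega : J ≠ J+1)]
  constructor
  · rintro ⟨b, hb⟩; exact ⟨b, (main b).mp hb⟩
  · rintro ⟨b, hb⟩; exact ⟨b, (main b).mpr hb⟩

/-- The matrix of the ATR formula for `θ`. -/
def AFml (θ : Formula) : Formula :=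
  .nall (θ.numBound+1) (.nall 0
    (.or (.not (fieldFml (θ.numBound+1) (θ.setBound+1)))
      (iffF (memP (.var 0) (.var (θ.numBound+1)) (θ.numBound+2) (θ.setBound+2))
        (Subst (θ.numBound+1) (θ.setBound+1) (θ.setBound+2) θ))))

lemma AFml_arith {θ : Formula} (hA : θ.Arithmetic) : (AFml θ).Arithmetic := by
  show (Formula.or _ _).Arithmetic
  exact ⟨fieldFml_arith _ _, iffF_arith (memP_arith _ _ _ _) (Subst_arith hA _ _ _)⟩

lemma AFml_sat {θ : Formula} (hA : θ.Arithmetic) (e : ℕ → ℕ) (E : ℕ → Set ℕ) :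
    (AFml θ).Sat e E ↔
      ∀ j ∈ fieldOf (E (θ.setBound+1)), ∀ n : ℕ,
        (Nat.pair n j ∈ E (θ.setBound+2) ↔
          θ.Sat (Function.update e 0 n)
            (Function.update E 0
              (restrictBelow (E (θ.setBound+1)) (E (θ.setBound+2)) j))) := by
  set J := θ.numBound + 1 with hJ
  set sx := θ.setBound + 1 with hsx
  set sy := θ.setBound + 2 with hsy
  have main : ∀ jv n : ℕ,
      ((Formula.or (.not (fieldFml J sx))
        (iffF (memP (.var 0) (.var J) (J+1) sy) (Subst J sx sy θ))).Sat
          (Function.update (Function.update e J jv) 0 n) E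
      ↔ (jv ∈ fieldOf (E sx) →
          (Nat.pair n jv ∈ E sy ↔
            θ.Sat (Function.update e 0 n)
              (Function.update E 0 (restrictBelow (E sx) (E sy) jv))))) := by
    intro jv n
    set e2 : ℕ → ℕ := Function.update (Function.update e J jv) 0 n with he2
    have e2J : e2 J = jv := by
      rw [he2, Function.update_of_ne (by omega : J ≠ 0), Function.update_self]
    have e20 : e2 0 = n := by rw [he2, Function.update_self]
    have hsub : (Subst J sx sy θ).Sat e2 E ↔
        θ.Sat (Function.update e 0 n)
          (Function.update E 0 (restrictBelow (E sx) (E sy) jv)) := by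
      rw [Subst_sat hA (by omega) sx sy e2 E, e2J, he2,
        Function.update_comm (by omega : J ≠ 0),
        Formula.sat_update_num (by omega : θ.numBound ≤ J)]
    have hfld : (fieldFml J sx).Sat e2 E ↔ jv ∈ fieldOf (E sx) := by
      rw [fieldFml_sat, e2J]
    have hmp : (memP (.var 0) (.var J) (J+1) sy).Sat e2 E ↔ Nat.pair n jv ∈ E sy := by
      rw [memP_sat (by simp only [Term.numBound]; omega) (by simp only [Term.numBound]; omega)]
      simp only [Term.val, e20, e2J]
    show ((¬ _) ∨ _) ↔ _
    rw [iffF_sat, hfld, hmp, hsub]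
    tauto
  show (∀ jv n, _) ↔ _
  constructor
  · intro H j hj n
    exact (main j n).mp (H j n) hj
  · intro H jv n
    exact (main jv n).mpr (fun hj => H jv hj n)

lemma AFml_sigma {θ : Formula} (hA : θ.Arithmetic) :
    (Formula.sex (θ.setBound+2) (AFml θ)).IsSigma 1 :=
  Formula.IsSigma.sex (Formula.IsSigma.arith (AFml_arith hA))


/-! ### Transfinite recursion in the real world -/

/-- The strict "below" relation of a coded order, restricted to its field. -/
def relOf (X : Set ℕ) (i j : ℕ) : Prop :=
  Nat.pair i j ∈ X ∧ i ∈ fieldOf X ∧ j ∈ fieldOf X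

lemma exists_recY {X : Set ℕ} (wf : WellFounded (relOf X))
    (θ : Formula) (e : ℕ → ℕ) (E : ℕ → Set ℕ) :
    ∃ Y : Set ℕ, ∀ j ∈ fieldOf X, ∀ n : ℕ,
      (Nat.pair n j ∈ Y ↔
        θ.Sat (Function.update e 0 n)
          (Function.update E 0 (restrictBelow X Y j))) := by
  classical
  set F : ∀ j : ℕ, (∀ i, relOf X i j → Set ℕ) → Set ℕ := fun j rec =>
    {n | θ.Sat (Function.update e 0 n) (Function.update E 0
      {p | ∃ m i, ∃ h : relOf X i j, p = Nat.pair m i ∧ m ∈ rec i h})} with hF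
  set col : ℕ → Set ℕ := wf.fix F with hcol
  set Y : Set ℕ := {p | ∃ n j, p = Nat.pair n j ∧ j ∈ fieldOf X ∧ n ∈ col j} with hY
  refine ⟨Y, ?_⟩
  intro j hj n
  have hmem : Nat.pair n j ∈ Y ↔ n ∈ col j := by
    constructor
    · rintro ⟨n', j', heq, hj', hc⟩
      obtain ⟨rfl, rfl⟩ := Nat.pair_eq_pair.mp heq
      exact hc
    · intro hc
      exact ⟨n, j, rfl, hj, hc⟩
  have hkey : restrictBelow X Y j
      = {p | ∃ m i, ∃ h : relOf X i j, p = Nat.pair m i ∧ m ∈ col i} := by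
    ext p
    constructor
    · rintro ⟨m, i, rfl, hij, hmY⟩
      obtain ⟨m', i', heq, hi', hc⟩ := hmY
      obtain ⟨rfl, rfl⟩ := Nat.pair_eq_pair.mp heq
      exact ⟨m, i, ⟨hij, hi', hj⟩, rfl, hc⟩
    · rintro ⟨m, i, hrel, rfl, hc⟩
      exact ⟨m, i, rfl, hrel.1, ⟨m, i, rfl, hrel.2.1, hc⟩⟩
  have hfix : col j = F j (fun i _ => col i) := by
    rw [hcol]; exact wf.fix_eq F j
  rw [hmem, hfix, hkey]
  exact Iff.rfl

/-! ### Internal well-orders are genuinely well-founded in a β-model -/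

/-- Formula: "X₁ codes a sequence visiting an `X₀`-descending chain". -/
def descFml : Formula :=
  .and
    (.nall 0 (.nex 1 (.nex 2 (.and (memP (.var 0) (.var 1) 3 1)
      (.and (memP ((Term.var 0).add .one) (.var 2) 3 1)
            (memP (.var 2) (.var 1) 3 0))))))
    (.nall 0 (.nall 1 (.nall 2
      (.or (.not (.and (memP (.var 0) (.var 1) 3 1) (memP (.var 0) (.var 2) 3 1)))
        (.eq (.var 1) (.var 2))))))

lemma descFml_arith : descFml.Arithmetic := by
  constructor
  · show (Formula.and _ (Formula.and _ _)).Arithmetic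
    exact ⟨memP_arith _ _ _ _, memP_arith _ _ _ _, memP_arith _ _ _ _⟩
  · show (Formula.or (Formula.not (Formula.and _ _)) _).Arithmetic
    exact ⟨⟨memP_arith _ _ _ _, memP_arith _ _ _ _⟩, trivial⟩

lemma descFml_sat (e : ℕ → ℕ) (E : ℕ → Set ℕ) :
    descFml.Sat e E ↔
      ((∀ n, ∃ a b, Nat.pair n a ∈ E 1 ∧ Nat.pair (n+1) b ∈ E 1 ∧ Nat.pair b a ∈ E 0) ∧
       (∀ n a a', Nat.pair n a ∈ E 1 → Nat.pair n a' ∈ E 1 → a = a')) := by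
  have upd3 : ∀ (n a b : ℕ),
      let e3 := Function.update (Function.update (Function.update e 0 n) 1 a) 2 b
      e3 0 = n ∧ e3 1 = a ∧ e3 2 = b := by
    intro n a b
    refine ⟨?_, ?_, ?_⟩
    · rw [Function.update_of_ne (by omega : (0:ℕ) ≠ 2),
        Function.update_of_ne (by omega : (0:ℕ) ≠ 1), Function.update_self]
    · rw [Function.update_of_ne (by omega : (1:ℕ) ≠ 2), Function.update_self]
    · rw [Function.update_self]
  constructor
  · rintro ⟨h1, h2⟩
    constructor
    · intro n
      obtain ⟨a, b, m1, m2, m3⟩ := h1 n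
      obtain ⟨u0, u1, u2⟩ := upd3 n a b
      rw [memP_sat (by simp only [Term.numBound]; omega)
        (by simp only [Term.numBound]; omega)] at m1 m2 m3
      simp only [Term.val, u0, u1, u2] at m1 m2 m3
      exact ⟨a, b, m1, m2, m3⟩
    · intro n a a' ha ha'
      have := h2 n a a'
      obtain ⟨u0, u1, u2⟩ := upd3 n a a'
      rcases this with hne | heq
      · exfalso
        apply hne
        constructor <;>
          · rw [memP_sat (by simp only [Term.numBound]; omega)
              (by simp only [Term.numBound]; omega)]
            simp only [Term.val, u0, u1, u2]
            assumption
      · simpa only [Formula.Sat, Term.val, u1, u2] using heq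
  · rintro ⟨h1, h2⟩
    constructor
    · intro n
      obtain ⟨a, b, m1, m2, m3⟩ := h1 n
      obtain ⟨u0, u1, u2⟩ := upd3 n a b
      refine ⟨a, b, ?_, ?_, ?_⟩ <;>
        · rw [memP_sat (by simp only [Term.numBound]; omega)
            (by simp only [Term.numBound]; omega)]
          simp only [Term.val, u0, u1, u2]
          assumption
    · intro n a a'
      obtain ⟨u0, u1, u2⟩ := upd3 n a a'
      by_cases hmm : Nat.pair n a ∈ E 1 ∧ Nat.pair n a' ∈ E 1
      · right
        show Term.val _ (.var 1) = Term.val _ (.var 2)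
        simp only [Term.val, u1, u2]
        exact h2 n a a' hmm.1 hmm.2
      · left
        intro hc
        apply hmm
        obtain ⟨c1, c2⟩ := hc
        rw [memP_sat (by simp only [Term.numBound]; omega)
          (by simp only [Term.numBound]; omega)] at c1 c2
        simp only [Term.val, u0, u1, u2] at c1 c2
        exact ⟨c1, c2⟩


lemma internal_wf {M : Set (Set ℕ)} (hβ : IsBetaModel M) {X : Set ℕ}
    (hX : X ∈ M) (hWO : InternalWO M X) : WellFounded (relOf X) := by
  classical
  by_contra hw
  have hex : ∃ a, ¬ Acc (relOf X) a := by
    by_contra hc; push_neg at hc; exact hw ⟨hc⟩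
  have step : ∀ a, ¬ Acc (relOf X) a → ∃ b, ¬ Acc (relOf X) b ∧ relOf X b a := by
    intro a ha
    by_contra hb; push_neg at hb
    exact ha (Acc.intro a fun b hba => by_contra fun hnb => hb b hnb hba)
  obtain ⟨a0, ha0⟩ := hex
  choose nxt hn1 hn2 using step
  let g : ℕ → {a : ℕ // ¬ Acc (relOf X) a} := fun n =>
    Nat.rec ⟨a0, ha0⟩ (fun _ p => ⟨nxt p.1 p.2, hn1 p.1 p.2⟩) n
  have hstep : ∀ n, relOf X (g (n+1)).1 (g n).1 := fun n => hn2 (g n).1 (g n).2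
  -- the graph of the descending sequence
  have hsig : (Formula.sex 1 descFml).IsSigma 1 :=
    Formula.IsSigma.sex (Formula.IsSigma.arith descFml_arith)
  have u1 : ∀ Z : Set ℕ, Function.update (fun _ => X) 1 Z 1 = Z :=
    fun Z => Function.update_self _ _ _
  have u0 : ∀ Z : Set ℕ, Function.update (fun _ => X) 1 Z 0 = X :=
    fun Z => Function.update_of_ne (by omega) _ _
  have hsat : (Formula.sex 1 descFml).Sat (fun _ => 0) (fun _ => X) := by
    refine ⟨{p | ∃ n, p = Nat.pair n ((g n).1)}, ?_⟩
    rw [descFml_sat, u0, u1]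
    constructor
    · intro n
      exact ⟨(g n).1, (g (n+1)).1, ⟨n, rfl⟩, ⟨n+1, rfl⟩, (hstep n).1⟩
    · rintro n a a' ⟨m, hm⟩ ⟨m', hm'⟩
      obtain ⟨rfl, rfl⟩ := Nat.pair_eq_pair.mp hm
      obtain ⟨rfl, rfl⟩ := Nat.pair_eq_pair.mp hm'
      rfl
  obtain ⟨Z', hZ'M, hZ'⟩ := (hβ.2 _ hsig (fun _ => 0) (fun _ => X) (fun _ => hX)).mpr hsat
  rw [Formula.satIn_iff_sat descFml_arith, descFml_sat, u0, u1] at hZ'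
  obtain ⟨hD1, hD2⟩ := hZ'
  choose A B hA hB hAB using hD1
  have hdesc : ∀ n, Nat.pair (A (n+1)) (A n) ∈ X := by
    intro n
    have hBA : B n = A (n+1) := hD2 (n+1) (B n) (A (n+1)) (hB n) (hA (n+1))
    exact hBA ▸ hAB n
  have hfield : ∀ n, A n ∈ fieldOf X := fun n => ⟨A (n+1), Or.inr (hdesc n)⟩
  -- the range of the sequence is a set of the model, by arithmetical comprehension
  have comp : SatArithComp M := beta_satArithComp hβ
  have hWA : (Formula.nex 1 (memP (.var 1) (.var 0) 2 0)).Arithmetic :=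
    memP_arith _ _ _ _
  have hWM := comp _ hWA (fun _ => 0) (fun _ => Z') (fun _ => hZ'M)
  have hWeq : ∀ a : ℕ,
      (a ∈ {n : ℕ | (Formula.nex 1 (memP (.var 1) (.var 0) 2 0)).SatIn M
        (Function.update (fun _ => 0) 0 n) (fun _ => Z')}) ↔ ∃ n, Nat.pair n a ∈ Z' := by
    intro a
    rw [Set.mem_setOf_eq, Formula.satIn_iff_sat hWA]
    have key : ∀ m : ℕ,
        ((memP (.var 1) (.var 0) 2 0).Sat
          (Function.update (Function.update (fun _ => 0) 0 a) 1 m) (fun _ => Z')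
          ↔ Nat.pair m a ∈ Z') := by
      intro m
      rw [memP_sat (by simp only [Term.numBound]; omega) (by simp only [Term.numBound]; omega)]
      simp only [Term.val, Function.update_self,
        Function.update_of_ne (by omega : (0:ℕ) ≠ 1), Function.update_self]
    constructor
    · rintro ⟨m, hm⟩; exact ⟨m, (key m).mp hm⟩
    · rintro ⟨m, hm⟩; exact ⟨m, (key m).mpr hm⟩
  obtain ⟨a, haW, haF, hmin⟩ :=
    hWO.2.2.2 _ hWM ⟨A 0, (hWeq _).mpr ⟨0, hA 0⟩, hfield 0⟩
  obtain ⟨n0, hn0⟩ := (hWeq a).mp haW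
  have haA : a = A n0 := hD2 n0 a (A n0) hn0 (hA n0)
  exact hmin (A (n0+1)) ((hWeq _).mpr ⟨n0+1, hA (n0+1)⟩) (hfield (n0+1)) (haA ▸ hdesc n0)


lemma coded_beta_model_satisfies_ATR_aux (C : Set ℕ) (h : IsCodedBetaModel C) :
    SatATR (codedFamily C) ∧ SatACA (codedFamily C) := by
  have hβ : IsBetaModel (codedFamily C) := h
  have comp : SatArithComp (codedFamily C) := beta_satArithComp hβ
  have hACA : SatACA (codedFamily C) := ⟨hβ.1, comp⟩
  refine ⟨⟨hACA, ?_⟩, hACA⟩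
  intro θ hθ e E hE X hX hWO
  have wf : WellFounded (relOf X) := internal_wf hβ hX hWO
  have hE1M : ∀ i, Function.update E (θ.setBound+1) X i ∈ codedFamily C := by
    intro i
    by_cases hi : i = θ.setBound+1
    · subst hi; rw [Function.update_self]; exact hX
    · rw [Function.update_of_ne hi]; exact hE i
  have keyupd : ∀ (Y R : Set ℕ) (e' : ℕ → ℕ),
      (θ.Sat e' (Function.update
          (Function.update (Function.update E (θ.setBound+1) X) (θ.setBound+2) Y) 0 R)
        ↔ θ.Sat e' (Function.update E 0 R)) := by
    intro Y R e'
    rw [Function.update_comm (by omega : θ.setBound+2 ≠ 0),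
      Formula.sat_update_set (by omega : θ.setBound ≤ θ.setBound+2),
      Function.update_comm (by omega : θ.setBound+1 ≠ 0),
      Formula.sat_update_set (by omega : θ.setBound ≤ θ.setBound+1)]
  have E'sx : ∀ Y : Set ℕ,
      Function.update (Function.update E (θ.setBound+1) X) (θ.setBound+2) Y
        (θ.setBound+1) = X := by
    intro Y
    rw [Function.update_of_ne (by omega : θ.setBound+1 ≠ θ.setBound+2),
      Function.update_self]
  have E'sy : ∀ Y : Set ℕ,
      Function.update (Function.update E (θ.setBound+1) X) (θ.setBound+2) Y
        (θ.setBound+2) = Y := fun Y => Function.update_self _ _ _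
  obtain ⟨Y0, hY0⟩ := exists_recY wf θ e E
  have hsat : (Formula.sex (θ.setBound+2) (AFml θ)).Sat e
      (Function.update E (θ.setBound+1) X) := by
    refine ⟨Y0, ?_⟩
    rw [AFml_sat hθ]
    simp only [E'sx, E'sy]
    intro j hj n
    rw [keyupd]
    exact hY0 j hj n
  obtain ⟨Y, hYM, hY⟩ :=
    (hβ.2 _ (AFml_sigma hθ) e (Function.update E (θ.setBound+1) X) hE1M).mpr hsat
  refine ⟨Y, hYM, ?_⟩
  rw [Formula.satIn_iff_sat (AFml_arith hθ), AFml_sat hθ] at hY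
  simp only [E'sx, E'sy] at hY
  intro j hj n
  rw [Formula.satIn_iff_sat hθ]
  have := hY j hj n
  rwa [keyupd] at this

end Paper

namespace Paper

/-- **Proposition 3.2.**  Every countable coded β-model satisfies ATR₀
(and hence also ACA₀). -/
theorem coded_beta_model_satisfies_ATR (C : Set ℕ) (h : IsCodedBetaModel C) :
    SatATR (codedFamily C) ∧ SatACA (codedFamily C) := by
  exact coded_beta_model_satisfies_ATR_aux C h

end Paper
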